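/- (Classical capacity of a bipartite unitary is at least its Schmidt strength) Let U be a unitary on ℂ^d ⊗ ℂ^d, {σ_i}_{i=1}^{d²} unitaries on ℂ^d with (1/d)Tr[σ_i†σ_j] = δ_{ij}, and define |Ψ_i⟩ = (U^{AB} ⊗ I)(σ_i^A ⊗ I)(|Φ_d⟩^{AB₂} ⊗ |Φ_d⟩^{BB₁}). Then each reduced state Ψ_i^{BB₁B₂} has von Neumann entropy log d, the average state Ψ̄ = (1/d²)Σ_i Ψ_i^{BB₁B₂} has entropy log d + K(U), and hence the Holevo quantity of the ensemble {1/d², Ψ_i^{BB₁B₂}} equals K(U). -/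

import Mathlib

open scoped BigOperators Kronecker ComplexOrder
open Matrix Complex MeasureTheory

noncomputable section

/-- The maximally entangled state `|Φ_d⟩ = (1/√d) Σ_t |t⟩⊗|t⟩` as a vector on `Fin d × Fin d`. -/
def Phi (d : ℕ) : Fin d × Fin d → ℂ := fun p => if p.1 = p.2 then ((1 / Real.sqrt d : ℝ) : ℂ) else 0

/-- Action of `E ⊗ I` on a bipartite vector. -/
def actL {d : ℕ} (E : Matrix (Fin d) (Fin d) ℂ) (v : Fin d × Fin d → ℂ) : Fin d × Fin d → ℂ :=
  fun p => ∑ a', E p.1 a' * v (a', p.2)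

/-- Action of `I ⊗ F` on a bipartite vector. -/
def actR {d : ℕ} (F : Matrix (Fin d) (Fin d) ℂ) (v : Fin d × Fin d → ℂ) : Fin d × Fin d → ℂ :=
  fun p => ∑ b', F p.2 b' * v (p.1, b')

/-- Outer product `|v⟩⟨v|`. -/
def outer {ι : Type*} [Fintype ι] (v : ι → ℂ) : Matrix ι ι ℂ := Matrix.of fun i j => v i * star (v j)

open Classical in
/-- Positive-semidefinite square root, extended by `0` off the PSD cone. -/
def psqrt {n : Type*} [Fintype n] [DecidableEq n] (A : Matrix n n ℂ) : Matrix n n ℂ :=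
  if h : A.PosSemidef then
    (h.1.eigenvectorUnitary : Matrix n n ℂ) * diagonal ((↑) ∘ Real.sqrt ∘ h.1.eigenvalues) *
      (star h.1.eigenvectorUnitary : Matrix n n ℂ) else 0

/-- Trace norm `‖A‖₁ = Tr √(AᴴA)`. -/
def traceNorm {n : Type*} [Fintype n] [DecidableEq n] (A : Matrix n n ℂ) : ℝ :=
  (psqrt (Aᴴ * A)).trace.re

/-- Uhlmann fidelity `F(ρ,σ) = (Tr √(√ρ σ √ρ))²`. -/
def fid {n : Type*} [Fintype n] [DecidableEq n] (ρ σ : Matrix n n ℂ) : ℝ :=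
  ((psqrt (psqrt ρ * σ * psqrt ρ)).trace.re) ^ 2

/-- Von Neumann entropy of a Hermitian matrix, `S(ρ) = -Σ λᵢ log λᵢ`. -/
def vN {n : Type*} [Fintype n] [DecidableEq n] {ρ : Matrix n n ℂ} (h : ρ.IsHermitian) : ℝ :=
  -∑ i, h.eigenvalues i * Real.log (h.eigenvalues i)

/-- Cyclic shift `X|t⟩ = |t-1⟩`, i.e. `X = Σ_t |t⟩⟨t+1|`. -/
def Xop (d : ℕ) [NeZero d] : Matrix (Fin d) (Fin d) ℂ :=
  Matrix.of fun t t' => if t' = t + 1 then 1 else 0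

/-- Clock operator `Z = Σ_t e^{2πit/d}|t⟩⟨t|`. -/
def Zop (d : ℕ) [NeZero d] : Matrix (Fin d) (Fin d) ℂ :=
  Matrix.of fun t t' => if t = t' then Complex.exp (2 * Real.pi * Complex.I * ((t : ℕ) : ℂ) / d) else 0

/-- Generalized Pauli operator `σ_{pq} = X^p Z^q`. -/
def pauli (d : ℕ) [NeZero d] (p q : Fin d) : Matrix (Fin d) (Fin d) ℂ :=
  Xop d ^ (p : ℕ) * Zop d ^ (q : ℕ)

/-- `|Ψ(U)⟩ = (U^{AB} ⊗ I^{R_A R_B})(|Φ_d⟩^{AR_A} ⊗ |Φ_d⟩^{BR_B})`, indexed `((a,r_A),(b,r_B))`. -/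
def PsiVec {d : ℕ} (U : Matrix (Fin d × Fin d) (Fin d × Fin d) ℂ) :
    (Fin d × Fin d) × (Fin d × Fin d) → ℂ :=
  fun x => ∑ a', ∑ b', U (x.1.1, x.2.1) (a', b') * Phi d (a', x.1.2) * Phi d (b', x.2.2)

/-- Reduced density matrix on the first factor of a bipartite pure state. -/
def redFst {ι κ : Type*} [Fintype ι] [Fintype κ] (v : ι × κ → ℂ) : Matrix ι ι ℂ :=
  Matrix.of fun x x' => ∑ y, v (x, y) * star (v (x', y))

/-- Reduced density matrix on the second factor of a bipartite pure state. -/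
def redSnd {ι κ : Type*} [Fintype ι] [Fintype κ] (v : ι × κ → ℂ) : Matrix κ κ ℂ :=
  Matrix.of fun y y' => ∑ x, v (x, y) * star (v (x, y'))

/-- `|Ψ_i⟩ = (U^{AB} ⊗ I)(σ^A ⊗ I)(|Φ_d⟩^{AB₂} ⊗ |Φ_d⟩^{BB₁})`,
indexed `(a, ((b, b₁), b₂))`. -/
def PsiMsg {d : ℕ} (U : Matrix (Fin d × Fin d) (Fin d × Fin d) ℂ)
    (σ : Matrix (Fin d) (Fin d) ℂ) : Fin d × ((Fin d × Fin d) × Fin d) → ℂ :=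
  fun x => ∑ a'', ∑ b', U (x.1, x.2.1.1) (a'', b') *
    (∑ a3, σ a'' a3 * Phi d (a3, x.2.2)) * Phi d (b', x.2.1.2)

namespace HolAux

open Polynomial Finset

variable {n : Type*} [Fintype n] [DecidableEq n]

lemma sum_conj_entries {m k : Type*} [Fintype m] [Fintype k] (M N : Matrix m k ℂ) :
    ∑ i, ∑ j, M i j * star (N i j) = (Nᴴ * M).trace := by
  rw [Matrix.trace]
  simp only [Matrix.diag_apply, Matrix.mul_apply, Matrix.conjTranspose_apply]
  rw [Finset.sum_comm]
  exact Finset.sum_congr rfl fun i _ => Finset.sum_congr rfl fun j _ => (mul_comm _ _)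

lemma charpoly_diagonal (g : n → ℂ) :
    (Matrix.diagonal g).charpoly = ∏ i, (X - C (g i)) := by
  unfold Matrix.charpoly
  have h : charmatrix (Matrix.diagonal g) = Matrix.diagonal (fun i => (X : ℂ[X]) - C (g i)) := by
    ext i j
    by_cases h : i = j
    · subst h; simp
    · simp [Matrix.charmatrix_apply_ne _ _ _ h, Matrix.diagonal_apply_ne _ h,
        Matrix.diagonal_apply_ne]
  rw [h, Matrix.det_diagonal]

lemma charpoly_unitary_conj (V D : Matrix n n ℂ) (hV : V ∈ Matrix.unitaryGroup n ℂ) :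
    (V * D * Vᴴ).charpoly = D.charpoly := by
  have hVV : V * Vᴴ = 1 := Matrix.mem_unitaryGroup_iff.mp hV
  have hmap1 : (V.map (C : ℂ →+* ℂ[X])) * (Vᴴ.map (C : ℂ →+* ℂ[X])) = 1 := by
    rw [← Matrix.map_mul, hVV]
    ext i j; by_cases h : i = j <;> simp [h, Matrix.one_apply]
  have hscalar : Matrix.scalar n (X : ℂ[X]) = (X : ℂ[X]) • (1 : Matrix n n ℂ[X]) := by
    ext i j; by_cases h : i = j <;> simp [h, Matrix.scalar_apply, Matrix.diagonal_apply,
      Matrix.one_apply]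
  have hch : charmatrix (V * D * Vᴴ) =
      (V.map (C : ℂ →+* ℂ[X])) * charmatrix D * (Vᴴ.map (C : ℂ →+* ℂ[X])) := by
    unfold charmatrix
    simp only [RingHom.mapMatrix_apply]
    rw [Matrix.map_mul, Matrix.map_mul, mul_sub, sub_mul]
    congr 1
    simp [hscalar, Matrix.mul_smul, Matrix.smul_mul, hmap1]
  unfold Matrix.charpoly
  rw [hch, Matrix.det_mul, Matrix.det_mul, mul_comm, ← mul_assoc, mul_comm (Vᴴ.map _).det,
    ← Matrix.det_mul, hmap1, Matrix.det_one, one_mul]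

lemma charpoly_eq_prod_eigs {A : Matrix n n ℂ} (hA : A.IsHermitian) :
    A.charpoly = ∏ i, (X - C ((hA.eigenvalues i : ℂ))) := by
  conv_lhs => rw [hA.spectral_theorem]
  rw [Unitary.conjStarAlgAut_apply, Matrix.star_eq_conjTranspose,
    charpoly_unitary_conj _ _ hA.eigenvectorUnitary.2, charpoly_diagonal]
  rfl

lemma prod_X_sub_C_inj {g e : n → ℂ}
    (h : ∏ i, (X - C (g i)) = ∏ i, (X - C (e i))) :
    Multiset.map g Finset.univ.val = Multiset.map e Finset.univ.val := by
  have h1 : ∀ (a : n → ℂ), ∏ i, (X - C (a i)) =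
      ((Multiset.map a Finset.univ.val).map (fun r => X - C r)).prod := by
    intro a
    rw [Multiset.map_map]
    rfl
  have h2 := congrArg Polynomial.roots ((h1 g).symm.trans (h.trans (h1 e)))
  rwa [Polynomial.roots_multiset_prod_X_sub_C, Polynomial.roots_multiset_prod_X_sub_C] at h2

lemma eig_sum_of_diag {A : Matrix n n ℂ} (hA : A.IsHermitian) {V : Matrix n n ℂ}
    (hV : V ∈ Matrix.unitaryGroup n ℂ) (g : n → ℝ)
    (hAeq : A = V * Matrix.diagonal (fun i => (g i : ℂ)) * Vᴴ) (f : ℝ → ℝ) :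
    ∑ i, f (hA.eigenvalues i) = ∑ i, f (g i) := by
  have hc1 : A.charpoly = ∏ i, (X - C ((g i : ℂ))) := by
    rw [hAeq, charpoly_unitary_conj _ _ hV, charpoly_diagonal]
  have hc2 := charpoly_eq_prod_eigs hA
  have hmult := prod_X_sub_C_inj (hc1.symm.trans hc2)
  have hreal : Multiset.map g Finset.univ.val = Multiset.map hA.eigenvalues Finset.univ.val := by
    apply Multiset.map_injective Complex.ofReal_injective
    rw [Multiset.map_map, Multiset.map_map]
    exact hmult
  have h1 : ∑ i, f (hA.eigenvalues i)
      = ((Multiset.map hA.eigenvalues Finset.univ.val).map f).sum := by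
    rw [Multiset.map_map]; rfl
  have h2 : ∑ i, f (g i) = ((Multiset.map g Finset.univ.val).map f).sum := by
    rw [Multiset.map_map]; rfl
  rw [h1, h2, hreal]

lemma trace_eq_sum_eigs {A : Matrix n n ℂ} (hA : A.IsHermitian) :
    A.trace = ∑ i, (hA.eigenvalues i : ℂ) := by
  conv_lhs => rw [hA.spectral_theorem]
  rw [Unitary.conjStarAlgAut_apply, Matrix.trace_mul_cycle]
  rw [Matrix.mem_unitaryGroup_iff'.mp hA.eigenvectorUnitary.2, one_mul, Matrix.trace_diagonal]
  rfl

lemma vN_proj {A : Matrix n n ℂ} (hA : A.IsHermitian) (t : ℝ) (ht : 0 < t)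
    (hAA : A * A = ((t : ℂ)) • A) (htr : A.trace = 1) : vN hA = - Real.log t := by
  have heig : ∀ i, hA.eigenvalues i = 0 ∨ hA.eigenvalues i = t := by
    intro i
    have hv := hA.mulVec_eigenvectorBasis i
    set lam := hA.eigenvalues i with hlam
    set v : n → ℂ := ⇑(hA.eigenvectorBasis i) with hvdef
    have hvne : v ≠ 0 := by
      intro hz
      exact hA.eigenvectorBasis.orthonormal.ne_zero i (by ext j; exact congrFun hz j)
    have hsm : ∀ (r : ℝ) (w : n → ℂ), r • w = ((r : ℂ)) • w := by
      intro r w; funext j; simp [Pi.smul_apply, Complex.real_smul]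
    have e1 : (A * A) *ᵥ v = ((lam * lam : ℝ) : ℂ) • v := by
      rw [← Matrix.mulVec_mulVec, hv, Matrix.mulVec_smul, hv, smul_smul]
      exact hsm _ _
    have e2 : (A * A) *ᵥ v = ((t * lam : ℝ) : ℂ) • v := by
      rw [hAA, Matrix.smul_mulVec, hv, hsm lam, smul_smul, ← Complex.ofReal_mul]
    have e3 : ((lam * lam : ℝ) : ℂ) = ((t * lam : ℝ) : ℂ) := by
      have heq := e1.symm.trans e2
      by_contra hne
      apply hvne
      have hsub : (((lam * lam : ℝ) : ℂ) - ((t * lam : ℝ) : ℂ)) • v = 0 := by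
        rw [sub_smul, heq, sub_self]
      rcases smul_eq_zero.mp hsub with h | h
      · exact absurd (sub_eq_zero.mp h) hne
      · exact absurd h hvne
    have e4 : lam * lam = t * lam := by exact_mod_cast e3
    rcases mul_eq_mul_right_iff.mp e4 with h | h
    · right; exact h
    · left; exact h
  have hsum : ∑ i, hA.eigenvalues i = 1 := by
    have h := trace_eq_sum_eigs hA
    rw [htr] at h
    exact_mod_cast h.symm
  unfold vN
  have hpt : ∀ i, hA.eigenvalues i * Real.log (hA.eigenvalues i)
      = hA.eigenvalues i * Real.log t := by
    intro i
    rcases heig i with h | h <;> simp [h]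
  rw [Finset.sum_congr rfl fun i _ => hpt i, ← Finset.sum_mul, hsum, one_mul]

end HolAux
namespace HolAux

open Finset

variable {d : ℕ}

/-- Auxiliary vector entries. -/
def Wfun (U : Matrix (Fin d × Fin d) (Fin d × Fin d) ℂ) (τ : Matrix (Fin d) (Fin d) ℂ)
    (a : Fin d) (y : (Fin d × Fin d) × Fin d) : ℂ :=
  ∑ p, U (a, y.1.1) (p, y.1.2) * τ p y.2

def Wmat (U : Matrix (Fin d × Fin d) (Fin d × Fin d) ℂ) (τ : Matrix (Fin d) (Fin d) ℂ) :
    Matrix ((Fin d × Fin d) × Fin d) (Fin d) ℂ :=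
  Matrix.of fun y a => Wfun U τ a y

lemma PsiMsg_apply (hd : 0 < d) (U : Matrix (Fin d × Fin d) (Fin d × Fin d) ℂ)
    (τ : Matrix (Fin d) (Fin d) ℂ) (x : Fin d × ((Fin d × Fin d) × Fin d)) :
    PsiMsg U τ x = (1/(d:ℂ)) * Wfun U τ x.1 x.2 := by
  have hr : ((1 / Real.sqrt d : ℝ) : ℂ) * ((1 / Real.sqrt d : ℝ) : ℂ) = 1/(d:ℂ) := by
    rw [← Complex.ofReal_mul, div_mul_div_comm, one_mul,
      Real.mul_self_sqrt (Nat.cast_nonneg d)]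
    push_cast
    ring
  unfold PsiMsg Phi Wfun
  simp only [mul_ite, mul_zero, ite_mul, zero_mul, Finset.sum_ite_eq', Finset.sum_ite_eq,
    Finset.mem_univ, if_true]
  rw [Finset.mul_sum]
  apply Finset.sum_congr rfl
  intro p _
  rw [← hr]
  ring

lemma Wfun_gram (U : Matrix (Fin d × Fin d) (Fin d × Fin d) ℂ)
    (hU : U ∈ Matrix.unitaryGroup (Fin d × Fin d) ℂ)
    (τ : Matrix (Fin d) (Fin d) ℂ) (hτ : τ ∈ Matrix.unitaryGroup (Fin d) ℂ) (a a' : Fin d) :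
    ∑ y, Wfun U τ a y * star (Wfun U τ a' y) = if a = a' then (d:ℂ) else 0 := by
  have hUU : U * Uᴴ = 1 := by
    rw [← Matrix.star_eq_conjTranspose]; exact Matrix.mem_unitaryGroup_iff.mp hU
  have hττ : τ * τᴴ = 1 := by
    rw [← Matrix.star_eq_conjTranspose]; exact Matrix.mem_unitaryGroup_iff.mp hτ
  calc ∑ y, Wfun U τ a y * star (Wfun U τ a' y)
      = ∑ b : Fin d, ∑ b₁ : Fin d, ∑ b₂ : Fin d,
          Wfun U τ a ((b,b₁),b₂) * star (Wfun U τ a' ((b,b₁),b₂)) := by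
        rw [Fintype.sum_prod_type, Fintype.sum_prod_type]
    _ = ∑ b : Fin d, (((Matrix.of fun b₁ p => U (a', b) (p, b₁)) * τ)ᴴ *
          ((Matrix.of fun b₁ p => U (a, b) (p, b₁)) * τ)).trace := by
        apply Finset.sum_congr rfl
        intro b _
        rw [← sum_conj_entries]
        apply Finset.sum_congr rfl
        intro b₁ _
        apply Finset.sum_congr rfl
        intro b₂ _
        simp [Matrix.mul_apply, Wfun]
    _ = ∑ b : Fin d, (((Matrix.of fun b₁ p => U (a', b) (p, b₁)))ᴴ *
          ((Matrix.of fun b₁ p => U (a, b) (p, b₁)))).trace := by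
        apply Finset.sum_congr rfl
        intro b _
        rw [Matrix.conjTranspose_mul, Matrix.trace_mul_comm]
        rw [Matrix.mul_assoc, ← Matrix.mul_assoc τ τᴴ, hττ, Matrix.one_mul]
        rw [Matrix.trace_mul_comm]
    _ = ∑ b : Fin d, (U * Uᴴ) (a, b) (a', b) := by
        apply Finset.sum_congr rfl
        intro b _
        rw [← sum_conj_entries]
        rw [Matrix.mul_apply]
        rw [Fintype.sum_prod_type]
        rw [Finset.sum_comm]
        apply Finset.sum_congr rfl
        intro b₁ _
        apply Finset.sum_congr rfl
        intro p _
        simp [Matrix.conjTranspose_apply]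
    _ = if a = a' then (d:ℂ) else 0 := by
        rw [hUU]
        by_cases h : a = a' <;> simp [h, Matrix.one_apply, Prod.ext_iff, Finset.card_univ]

lemma redSnd_PsiMsg (hd : 0 < d) (U : Matrix (Fin d × Fin d) (Fin d × Fin d) ℂ)
    (τ : Matrix (Fin d) (Fin d) ℂ) :
    redSnd (PsiMsg U τ) = (1/(d:ℂ)^2) • (Wmat U τ * (Wmat U τ)ᴴ) := by
  ext y y'
  simp only [redSnd, Matrix.of_apply, Matrix.smul_apply, Matrix.mul_apply,
    Matrix.conjTranspose_apply, smul_eq_mul, Wmat]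
  rw [Finset.mul_sum]
  apply Finset.sum_congr rfl
  intro a _
  rw [PsiMsg_apply hd U τ (a, y), PsiMsg_apply hd U τ (a, y'), star_mul']
  have hst : star (1/(d:ℂ)) = 1/(d:ℂ) := by
    simp
  rw [hst]
  ring

lemma Wmat_gram (U : Matrix (Fin d × Fin d) (Fin d × Fin d) ℂ)
    (hU : U ∈ Matrix.unitaryGroup (Fin d × Fin d) ℂ)
    (τ : Matrix (Fin d) (Fin d) ℂ) (hτ : τ ∈ Matrix.unitaryGroup (Fin d) ℂ) :
    (Wmat U τ)ᴴ * Wmat U τ = (d:ℂ) • 1 := by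
  ext a a'
  simp only [Matrix.mul_apply, Matrix.conjTranspose_apply, Matrix.of_apply, Matrix.smul_apply,
    Matrix.one_apply, smul_eq_mul, Wmat]
  calc ∑ y, star (Wfun U τ a y) * Wfun U τ a' y
      = star (∑ y, Wfun U τ a y * star (Wfun U τ a' y)) := by
        rw [star_sum]
        apply Finset.sum_congr rfl
        intro y _
        simp [mul_comm]
    _ = star (if a = a' then (d:ℂ) else 0) := by rw [Wfun_gram U hU τ hτ a a']
    _ = (d:ℂ) * (if a = a' then 1 else 0) := by
        by_cases hh : a = a' <;> simp [hh]

lemma part1 (hd : 0 < d) (U : Matrix (Fin d × Fin d) (Fin d × Fin d) ℂ)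
    (hU : U ∈ Matrix.unitaryGroup (Fin d × Fin d) ℂ)
    (τ : Matrix (Fin d) (Fin d) ℂ) (hτ : τ ∈ Matrix.unitaryGroup (Fin d) ℂ)
    (h : (redSnd (PsiMsg U τ)).IsHermitian) : vN h = Real.log d := by
  have hd0 : (d:ℂ) ≠ 0 := Nat.cast_ne_zero.mpr hd.ne'
  have hAA : redSnd (PsiMsg U τ) * redSnd (PsiMsg U τ)
      = (((1/(d:ℝ)) : ℂ)) • redSnd (PsiMsg U τ) := by
    rw [redSnd_PsiMsg hd U τ]
    have h1 : (Wmat U τ * (Wmat U τ)ᴴ) * (Wmat U τ * (Wmat U τ)ᴴ)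
        = (d:ℂ) • (Wmat U τ * (Wmat U τ)ᴴ) := by
      rw [Matrix.mul_assoc, ← Matrix.mul_assoc (Wmat U τ)ᴴ, Wmat_gram U hU τ hτ]
      simp only [Matrix.smul_mul, Matrix.mul_smul, Matrix.one_mul]
    calc ((1/(d:ℂ)^2) • (Wmat U τ * (Wmat U τ)ᴴ)) * ((1/(d:ℂ)^2) • (Wmat U τ * (Wmat U τ)ᴴ))
        = (1/(d:ℂ)^2) • ((1/(d:ℂ)^2) • ((Wmat U τ * (Wmat U τ)ᴴ) * (Wmat U τ * (Wmat U τ)ᴴ))) := by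
          rw [Matrix.smul_mul, Matrix.mul_smul]
      _ = (1/(d:ℂ)^2) • ((1/(d:ℂ)^2) • ((d:ℂ) • (Wmat U τ * (Wmat U τ)ᴴ))) := by rw [h1]
      _ = (((1/(d:ℝ)) : ℂ)) • ((1/(d:ℂ)^2) • (Wmat U τ * (Wmat U τ)ᴴ)) := by
          rw [smul_smul, smul_smul, smul_smul]
          congr 1
          push_cast
          field_simp
  have htr : (redSnd (PsiMsg U τ)).trace = 1 := by
    rw [redSnd_PsiMsg hd U τ, Matrix.trace_smul, Matrix.trace_mul_comm, Wmat_gram U hU τ hτ,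
      Matrix.trace_smul, Matrix.trace_one]
    simp only [smul_eq_mul, Fintype.card_fin]
    field_simp
  have hv := vN_proj h (1/d) (by positivity) (by exact_mod_cast hAA) htr
  rw [hv, one_div, Real.log_inv, neg_neg]

end HolAux
namespace HolAux

open Finset

variable {d : ℕ}

lemma trace_from_ortho {ι : Type*} [DecidableEq ι] (G : ι → Matrix (Fin d) (Fin d) ℂ)
    (hG : ∀ s t, (1 / d : ℂ) * ((G s)ᴴ * G t).trace = if s = t then 1 else 0)
    (hd : 0 < d) (s t : ι) :
    ((G s)ᴴ * G t).trace = (d:ℂ) * (if s = t then 1 else 0) := by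
  have hd0 : (d:ℂ) ≠ 0 := Nat.cast_ne_zero.mpr hd.ne'
  have h := hG s t
  field_simp at h
  rw [h]

lemma vec_outer_entry {ι κ : Type*} [Fintype ι] (X Y : Matrix ι κ ℂ) (k k' : κ) :
    ∑ a, X a k * star (Y a k') = (Yᴴ * X) k' k := by
  rw [Matrix.mul_apply]
  apply Finset.sum_congr rfl
  intro a _
  rw [Matrix.conjTranspose_apply]
  ring

lemma sum_mul_star_expand {ι κ : Type*} [Fintype ι] [Fintype κ] (f g : κ → ℂ) (X Y : κ → ι → ℂ) :
    ∑ a, (∑ s, f s * X s a) * star (∑ t, g t * Y t a)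
      = ∑ s, ∑ t, (f s * star (g t)) * ∑ a, X s a * star (Y t a) := by
  calc ∑ a, (∑ s, f s * X s a) * star (∑ t, g t * Y t a)
      = ∑ a, ∑ s, ∑ t, (f s * star (g t)) * (X s a * star (Y t a)) := by
        apply Finset.sum_congr rfl
        intro a _
        rw [star_sum, Finset.sum_mul_sum]
        apply Finset.sum_congr rfl
        intro s _
        apply Finset.sum_congr rfl
        intro t _
        rw [star_mul']
        ring
    _ = ∑ s, ∑ a, ∑ t, (f s * star (g t)) * (X s a * star (Y t a)) := Finset.sum_comm
    _ = ∑ s, ∑ t, ∑ a, (f s * star (g t)) * (X s a * star (Y t a)) :=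
        Finset.sum_congr rfl fun s _ => Finset.sum_comm
    _ = ∑ s, ∑ t, (f s * star (g t)) * ∑ a, X s a * star (Y t a) := by
        apply Finset.sum_congr rfl
        intro s _
        apply Finset.sum_congr rfl
        intro t _
        rw [Finset.mul_sum]

lemma sigma_complete (hd : 0 < d) (σ : Fin (d*d) → Matrix (Fin d) (Fin d) ℂ)
    (hσ : ∀ i j, (1 / d : ℂ) * ((σ i)ᴴ * σ j).trace = if i = j then 1 else 0)
    (p q r s : Fin d) :
    ∑ i, σ i p q * star (σ i r s)
      = (d:ℂ) * ((if p = r then 1 else 0) * (if q = s then 1 else 0)) := by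
  have hd0 : (d:ℂ) ≠ 0 := Nat.cast_ne_zero.mpr hd.ne'
  set e : Fin d × Fin d ≃ Fin (d*d) := finProdFinEquiv with he
  set V : Matrix (Fin (d*d)) (Fin (d*d)) ℂ :=
    Matrix.of (fun x j => σ j (e.symm x).1 (e.symm x).2) with hV
  have h1 : Vᴴ * V = (d:ℂ) • 1 := by
    ext j j'
    simp only [Matrix.mul_apply, Matrix.conjTranspose_apply, Matrix.of_apply, hV,
      Matrix.smul_apply, Matrix.one_apply, smul_eq_mul]
    calc ∑ x, star (σ j (e.symm x).1 (e.symm x).2) * σ j' (e.symm x).1 (e.symm x).2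
        = ∑ y : Fin d × Fin d, star (σ j y.1 y.2) * σ j' y.1 y.2 :=
          Fintype.sum_equiv e.symm _ _ (fun x => rfl)
      _ = ((σ j)ᴴ * σ j').trace := by
          rw [← sum_conj_entries (σ j') (σ j), Fintype.sum_prod_type]
          apply Finset.sum_congr rfl
          intro a _
          apply Finset.sum_congr rfl
          intro b _
          ring
      _ = (d:ℂ) * (if j = j' then 1 else 0) := trace_from_ortho σ hσ hd j j'
  have h3 : ((d:ℂ)⁻¹ • Vᴴ) * V = 1 := by
    rw [Matrix.smul_mul, h1, smul_smul, inv_mul_cancel₀ hd0, one_smul]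
  have h4 := mul_eq_one_comm.mp h3
  have h2 : V * Vᴴ = (d:ℂ) • 1 := by
    calc V * Vᴴ = (d:ℂ) • (V * ((d:ℂ)⁻¹ • Vᴴ)) := by
          rw [Matrix.mul_smul, smul_smul, mul_inv_cancel₀ hd0, one_smul]
      _ = (d:ℂ) • 1 := by rw [h4]
  have h5 : (V * Vᴴ) (e (p,q)) (e (r,s)) = ((d:ℂ) • (1 : Matrix (Fin (d*d)) (Fin (d*d)) ℂ))
      (e (p,q)) (e (r,s)) := by rw [h2]
  simp only [Matrix.mul_apply, Matrix.conjTranspose_apply, Matrix.of_apply, hV,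
    Matrix.smul_apply, Matrix.one_apply, smul_eq_mul, Equiv.symm_apply_apply] at h5
  rw [h5]
  by_cases h1' : p = r <;> by_cases h2' : q = s <;>
    simp [h1', h2', Prod.ext_iff, e.injective.eq_iff, Prod.mk.injEq]

lemma twirl (hd : 0 < d) (σ : Fin (d*d) → Matrix (Fin d) (Fin d) ℂ)
    (hσ : ∀ i j, (1 / d : ℂ) * ((σ i)ᴴ * σ j).trace = if i = j then 1 else 0)
    (N : Matrix (Fin d) (Fin d) ℂ) :
    ∑ i, (σ i)ᴴ * N * σ i = ((d:ℂ) * N.trace) • (1 : Matrix (Fin d) (Fin d) ℂ) := by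
  ext x y
  rw [Matrix.sum_apply]
  calc ∑ i, ((σ i)ᴴ * N * σ i) x y
      = ∑ i, ∑ q, ∑ p, star (σ i p x) * N p q * σ i q y := by
        apply Finset.sum_congr rfl
        intro i _
        rw [Matrix.mul_apply]
        apply Finset.sum_congr rfl
        intro q _
        rw [Matrix.mul_apply, Finset.sum_mul]
        apply Finset.sum_congr rfl
        intro p _
        rw [Matrix.conjTranspose_apply]
    _ = ∑ q, ∑ i, ∑ p, star (σ i p x) * N p q * σ i q y := Finset.sum_comm
    _ = ∑ q, ∑ p, ∑ i, star (σ i p x) * N p q * σ i q y :=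
        Finset.sum_congr rfl fun q _ => Finset.sum_comm
    _ = ∑ q, ∑ p, N p q * ∑ i, σ i q y * star (σ i p x) := by
        apply Finset.sum_congr rfl
        intro q _
        apply Finset.sum_congr rfl
        intro p _
        rw [Finset.mul_sum]
        apply Finset.sum_congr rfl
        intro i _
        ring
    _ = ∑ q, ∑ p, N p q * ((d:ℂ) * ((if q = p then 1 else 0) * (if y = x then 1 else 0))) := by
        apply Finset.sum_congr rfl
        intro q _
        apply Finset.sum_congr rfl
        intro p _
        rw [sigma_complete hd σ hσ q y p x]
    _ = (((d:ℂ) * N.trace) • (1 : Matrix (Fin d) (Fin d) ℂ)) x y := by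
        by_cases hxy : y = x
        · subst hxy
          simp only [if_true, mul_one, Matrix.smul_apply, Matrix.one_apply_eq, smul_eq_mul,
            mul_ite, mul_zero, Finset.sum_ite_eq, Finset.sum_ite_eq', Finset.mem_univ]
          simp [Matrix.trace, Matrix.diag, Finset.mul_sum, mul_comm]
        · have hne : x ≠ y := fun hh => hxy hh.symm
          simp [hxy, hne, Matrix.one_apply]

end HolAux
namespace HolAux

open Finset

variable {d : ℕ}

lemma kron_conjT (A B : Matrix (Fin d) (Fin d) ℂ) : (A ⊗ₖ B)ᴴ = Aᴴ ⊗ₖ Bᴴ := by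
  ext x y
  simp only [Matrix.conjTranspose_apply, Matrix.kroneckerMap_apply, star_mul']
  try ring

lemma sum_c_sq {S : ℕ} (hd : 0 < d) (U : Matrix (Fin d × Fin d) (Fin d × Fin d) ℂ)
    (hU : U ∈ Matrix.unitaryGroup (Fin d × Fin d) ℂ)
    (c : Fin S → ℝ) (E F : Fin S → Matrix (Fin d) (Fin d) ℂ)
    (hdecomp : U = ∑ s, (c s : ℂ) • (E s ⊗ₖ F s))
    (hE : ∀ s s', (1 / d : ℂ) * ((E s)ᴴ * E s').trace = if s = s' then 1 else 0)
    (hF : ∀ s s', (1 / d : ℂ) * ((F s)ᴴ * F s').trace = if s = s' then 1 else 0) :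
    ∑ s, (c s)^2 = 1 := by
  have hd0 : (d:ℂ) ≠ 0 := Nat.cast_ne_zero.mpr hd.ne'
  have htrU : (Uᴴ * U).trace = ((d:ℂ))^2 := by
    rw [← Matrix.star_eq_conjTranspose, Matrix.mem_unitaryGroup_iff'.mp hU, Matrix.trace_one]
    simp [Fintype.card_prod]
    try push_cast
    try ring
  have htrU2 : (Uᴴ * U).trace = (d:ℂ)^2 * ∑ s, ((c s:ℂ))^2 := by
    conv_lhs => rw [hdecomp]
    rw [Matrix.conjTranspose_sum, Matrix.sum_mul, Matrix.trace_sum]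
    have hterm : ∀ t, ((((c t : ℂ) • (E t ⊗ₖ F t))ᴴ) * (∑ s, (c s : ℂ) • (E s ⊗ₖ F s))).trace
        = (c t : ℂ) * ((c t : ℂ) * ((d:ℂ) * (d:ℂ))) := by
      intro t
      rw [Matrix.mul_sum, Matrix.trace_sum]
      have h2 : ∀ s, ((((c t : ℂ) • (E t ⊗ₖ F t))ᴴ) * ((c s : ℂ) • (E s ⊗ₖ F s))).trace
          = (c t : ℂ) * (c s : ℂ) * (((E t)ᴴ * E s).trace * ((F t)ᴴ * F s).trace) := by
        intro s
        rw [Matrix.conjTranspose_smul, kron_conjT, Matrix.smul_mul, Matrix.mul_smul,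
          ← Matrix.mul_kronecker_mul, smul_smul, Matrix.trace_smul, Matrix.trace_kronecker]
        simp only [smul_eq_mul, Complex.star_def, Complex.conj_ofReal]
        try ring
      rw [Finset.sum_congr rfl fun s _ => h2 s]
      have h3 : ∀ s, (c t : ℂ) * (c s : ℂ) * (((E t)ᴴ * E s).trace * ((F t)ᴴ * F s).trace)
          = if t = s then (c t : ℂ) * ((c t : ℂ) * ((d:ℂ) * (d:ℂ))) else 0 := by
        intro s
        rw [trace_from_ortho E hE hd t s, trace_from_ortho F hF hd t s]
        by_cases hst : t = s
        · subst hst; simp; try ring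
        · simp [hst]
      rw [Finset.sum_congr rfl fun s _ => h3 s, Finset.sum_ite_eq univ t, if_pos (mem_univ t)]
    rw [Finset.sum_congr rfl fun t _ => hterm t, Finset.mul_sum]
    apply Finset.sum_congr rfl
    intro t _
    ring
  have h4 : (d:ℂ)^2 * ∑ s, ((c s:ℂ))^2 = (d:ℂ)^2 := htrU2.symm.trans htrU
  have h5 : (∑ s, ((c s:ℂ))^2) = 1 := by
    have hd2 : (d:ℂ)^2 ≠ 0 := pow_ne_zero 2 hd0
    field_simp at h4
    exact h4
  exact_mod_cast h5

lemma Wfun_decomp {S : ℕ} (U : Matrix (Fin d × Fin d) (Fin d × Fin d) ℂ)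
    (c : Fin S → ℝ) (E F : Fin S → Matrix (Fin d) (Fin d) ℂ)
    (hdecomp : U = ∑ s, (c s : ℂ) • (E s ⊗ₖ F s))
    (τ : Matrix (Fin d) (Fin d) ℂ) (a : Fin d) (y : (Fin d × Fin d) × Fin d) :
    Wfun U τ a y = ∑ s, ((c s : ℂ) * F s y.1.1 y.1.2) * (E s * τ) a y.2 := by
  unfold Wfun
  calc ∑ p, U (a, y.1.1) (p, y.1.2) * τ p y.2
      = ∑ p, ∑ s, ((c s:ℂ) * (E s a p * F s y.1.1 y.1.2)) * τ p y.2 := by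
        apply Finset.sum_congr rfl
        intro p _
        rw [hdecomp]
        simp only [Matrix.sum_apply, Matrix.smul_apply, Matrix.kroneckerMap_apply, smul_eq_mul]
        rw [Finset.sum_mul]
    _ = ∑ s, ∑ p, ((c s:ℂ) * (E s a p * F s y.1.1 y.1.2)) * τ p y.2 := Finset.sum_comm
    _ = ∑ s, ((c s : ℂ) * F s y.1.1 y.1.2) * (E s * τ) a y.2 := by
        apply Finset.sum_congr rfl
        intro s _
        rw [Matrix.mul_apply, Finset.mul_sum]
        apply Finset.sum_congr rfl
        intro p _
        ring

lemma redSnd_entry (hd : 0 < d) (U : Matrix (Fin d × Fin d) (Fin d × Fin d) ℂ)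
    (τ : Matrix (Fin d) (Fin d) ℂ) (y y' : (Fin d × Fin d) × Fin d) :
    redSnd (PsiMsg U τ) y y'
      = (1/(d:ℂ)^2) * ∑ a, Wfun U τ a y * star (Wfun U τ a y') := by
  rw [redSnd_PsiMsg hd U τ]
  simp only [Matrix.smul_apply, Matrix.mul_apply, Matrix.conjTranspose_apply, Matrix.of_apply,
    smul_eq_mul, Wmat]

lemma sum_redSnd_entry {S : ℕ} (hd : 0 < d) (U : Matrix (Fin d × Fin d) (Fin d × Fin d) ℂ)
    (c : Fin S → ℝ) (E F : Fin S → Matrix (Fin d) (Fin d) ℂ)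
    (hdecomp : U = ∑ s, (c s : ℂ) • (E s ⊗ₖ F s))
    (hE : ∀ s s', (1 / d : ℂ) * ((E s)ᴴ * E s').trace = if s = s' then 1 else 0)
    (σ : Fin (d * d) → Matrix (Fin d) (Fin d) ℂ)
    (hσ : ∀ i j, (1 / d : ℂ) * ((σ i)ᴴ * σ j).trace = if i = j then 1 else 0)
    (y y' : (Fin d × Fin d) × Fin d) :
    (∑ i, redSnd (PsiMsg U (σ i))) y y'
      = (if y.2 = y'.2 then 1 else 0)
          * ∑ s, (c s:ℂ)^2 * (F s y.1.1 y.1.2 * star (F s y'.1.1 y'.1.2)) := by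
  have hd0 : (d:ℂ) ≠ 0 := Nat.cast_ne_zero.mpr hd.ne'
  rw [Matrix.sum_apply]
  calc ∑ i, redSnd (PsiMsg U (σ i)) y y'
      = ∑ i, (1/(d:ℂ)^2) * ∑ s, ∑ t,
          (((c s : ℂ) * F s y.1.1 y.1.2) * star ((c t : ℂ) * F t y'.1.1 y'.1.2))
            * ∑ a, (E s * σ i) a y.2 * star ((E t * σ i) a y'.2) := by
        apply Finset.sum_congr rfl
        intro i _
        rw [redSnd_entry hd U (σ i) y y']
        congr 1
        calc ∑ a, Wfun U (σ i) a y * star (Wfun U (σ i) a y')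
            = ∑ a, (∑ s, ((c s : ℂ) * F s y.1.1 y.1.2) * (E s * σ i) a y.2)
                * star (∑ t, ((c t : ℂ) * F t y'.1.1 y'.1.2) * (E t * σ i) a y'.2) := by
              apply Finset.sum_congr rfl
              intro a _
              rw [Wfun_decomp U c E F hdecomp (σ i) a y, Wfun_decomp U c E F hdecomp (σ i) a y']
          _ = _ := by
              rw [sum_mul_star_expand (fun s => (c s : ℂ) * F s y.1.1 y.1.2)
                (fun t => (c t : ℂ) * F t y'.1.1 y'.1.2)
                (fun s a => (E s * σ i) a y.2) (fun t a => (E t * σ i) a y'.2)]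
    _ = (1/(d:ℂ)^2) * ∑ s, ∑ t,
          (((c s : ℂ) * F s y.1.1 y.1.2) * star ((c t : ℂ) * F t y'.1.1 y'.1.2))
            * ∑ i, ((E t * σ i)ᴴ * (E s * σ i)) y'.2 y.2 := by
        rw [← Finset.mul_sum, Finset.sum_comm]
        congr 1
        apply Finset.sum_congr rfl
        intro s _
        rw [Finset.sum_comm]
        apply Finset.sum_congr rfl
        intro t _
        rw [← Finset.mul_sum]
        congr 1
        apply Finset.sum_congr rfl
        intro i _
        rw [vec_outer_entry (E s * σ i) (E t * σ i) y.2 y'.2]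
    _ = (1/(d:ℂ)^2) * ∑ s, ∑ t,
          (((c s : ℂ) * F s y.1.1 y.1.2) * star ((c t : ℂ) * F t y'.1.1 y'.1.2))
            * (((d:ℂ) * ((d:ℂ) * (if t = s then 1 else 0))) * (if y'.2 = y.2 then 1 else 0)) := by
        congr 1
        apply Finset.sum_congr rfl
        intro s _
        apply Finset.sum_congr rfl
        intro t _
        congr 1
        have h1 : ∀ i : Fin (d*d), (E t * σ i)ᴴ * (E s * σ i)
            = (σ i)ᴴ * ((E t)ᴴ * E s) * σ i := by
          intro i
          rw [Matrix.conjTranspose_mul]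
          rw [Matrix.mul_assoc, Matrix.mul_assoc, ← Matrix.mul_assoc (E t)ᴴ]
        rw [Finset.sum_congr rfl fun i _ => congrFun (congrFun (h1 i) y'.2) y.2]
        have h2 : ∑ i, ((σ i)ᴴ * ((E t)ᴴ * E s) * σ i) y'.2 y.2
            = (∑ i, (σ i)ᴴ * ((E t)ᴴ * E s) * σ i) y'.2 y.2 := by
          rw [Matrix.sum_apply]
        rw [h2, twirl hd σ hσ ((E t)ᴴ * E s), trace_from_ortho E hE hd t s]
        simp [Matrix.smul_apply, Matrix.one_apply, mul_ite, mul_one, mul_zero]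
    _ = (if y.2 = y'.2 then 1 else 0)
          * ∑ s, (c s:ℂ)^2 * (F s y.1.1 y.1.2 * star (F s y'.1.1 y'.1.2)) := by
        have hcol : ∀ s, ∑ t,
            (((c s : ℂ) * F s y.1.1 y.1.2) * star ((c t : ℂ) * F t y'.1.1 y'.1.2))
              * (((d:ℂ) * ((d:ℂ) * (if t = s then 1 else 0))) * (if y'.2 = y.2 then 1 else 0))
            = (if y'.2 = y.2 then 1 else 0) * ((d:ℂ)^2
                * ((c s:ℂ)^2 * (F s y.1.1 y.1.2 * star (F s y'.1.1 y'.1.2)))) := by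
          intro s
          rw [Finset.sum_eq_single s]
          · simp only [if_pos rfl, star_mul', Complex.star_def, Complex.conj_ofReal]
            by_cases h3 : y'.2 = y.2 <;> simp [h3] <;> try ring
          · intro t _ hts
            simp [hts]
          · intro hs
            exact absurd (mem_univ s) hs
        rw [Finset.sum_congr rfl fun s _ => hcol s, ← Finset.mul_sum, ← Finset.mul_sum]
        have h5 : (if y'.2 = y.2 then (1:ℂ) else 0) = (if y.2 = y'.2 then 1 else 0) := by
          by_cases h3 : y'.2 = y.2
          · simp [h3]
          · have h4 : ¬ y.2 = y'.2 := fun hh => h3 hh.symm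
            simp [h3, h4]
        rw [h5]
        field_simp

end HolAux
namespace HolAux

open Finset

variable {d : ℕ}

lemma part2 {S : ℕ} (hd : 0 < d) (U : Matrix (Fin d × Fin d) (Fin d × Fin d) ℂ)
    (hU : U ∈ Matrix.unitaryGroup (Fin d × Fin d) ℂ)
    (c : Fin S → ℝ) (E F : Fin S → Matrix (Fin d) (Fin d) ℂ)
    (hc : ∀ s, 0 < c s)
    (hdecomp : U = ∑ s, (c s : ℂ) • (E s ⊗ₖ F s))
    (hE : ∀ s s', (1 / d : ℂ) * ((E s)ᴴ * E s').trace = if s = s' then 1 else 0)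
    (hF : ∀ s s', (1 / d : ℂ) * ((F s)ᴴ * F s').trace = if s = s' then 1 else 0)
    (σ : Fin (d * d) → Matrix (Fin d) (Fin d) ℂ)
    (hσ : ∀ i j, (1 / d : ℂ) * ((σ i)ᴴ * σ j).trace = if i = j then 1 else 0)
    (h : (((1 : ℂ) / (d ^ 2 : ℂ)) • ∑ i, redSnd (PsiMsg U (σ i))).IsHermitian) :
    vN h = Real.log d + (-∑ s, c s ^ 2 * Real.log (c s ^ 2)) := by
  have hd0 : (d:ℂ) ≠ 0 := Nat.cast_ne_zero.mpr hd.ne'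
  have hdR : (0:ℝ) < d := by exact_mod_cast hd
  have hdR0 : (d:ℝ) ≠ 0 := ne_of_gt hdR
  set r : ℂ := ((Real.sqrt d : ℝ) : ℂ) with hr
  have hrr : r * r = (d:ℂ) := by
    rw [hr, ← Complex.ofReal_mul, Real.mul_self_sqrt (Nat.cast_nonneg d)]
    norm_cast
  have hr0 : r ≠ 0 := by
    intro h0
    rw [h0, mul_zero] at hrr
    exact hd0 hrr.symm
  have hrinv : r⁻¹ * r⁻¹ = (d:ℂ)⁻¹ := by rw [← mul_inv, hrr]
  have hstar_r : star r⁻¹ = r⁻¹ := by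
    rw [hr, ← Complex.ofReal_inv]
    exact Complex.conj_ofReal _
  set w : Fin S → EuclideanSpace ℂ (Fin d × Fin d) :=
    fun s => WithLp.toLp 2 (fun x : Fin d × Fin d => r⁻¹ * F s x.1 x.2) with hw
  have hinner : ∀ s t, (inner ℂ (w s) (w t) : ℂ) = (if s = t then (1:ℂ) else 0) := by
    intro s t
    calc (inner ℂ (w s) (w t) : ℂ)
        = ∑ x : Fin d × Fin d, star (r⁻¹ * F s x.1 x.2) * (r⁻¹ * F t x.1 x.2) := by
          simp [PiLp.inner_apply, RCLike.inner_apply, hw, RCLike.star_def]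
          exact Finset.sum_congr rfl fun _ _ => mul_comm _ _
      _ = (d:ℂ)⁻¹ * ∑ x : Fin d × Fin d, F t x.1 x.2 * star (F s x.1 x.2) := by
          rw [Finset.mul_sum]
          apply Finset.sum_congr rfl
          intro x _
          rw [star_mul', hstar_r, ← hrinv]
          ring
      _ = (d:ℂ)⁻¹ * ((F s)ᴴ * F t).trace := by
          congr 1
          rw [← sum_conj_entries (F t) (F s), Fintype.sum_prod_type]
      _ = if s = t then 1 else 0 := by
          rw [← hF s t]
          rw [one_div]
  have how : Orthonormal ℂ w := orthonormal_iff_ite.mpr hinner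
  have hS : S ≤ d * d := by
    have h1 := how.linearIndependent.fintype_card_le_finrank
    simpa [finrank_euclideanSpace] using h1
  set ι : Fin S → Fin d × Fin d := fun s => finProdFinEquiv.symm (Fin.castLE hS s) with hι
  have hιinj : Function.Injective ι := by
    intro a b hab
    exact Fin.castLE_injective hS (finProdFinEquiv.symm.injective hab)
  set v : (Fin d × Fin d) → EuclideanSpace ℂ (Fin d × Fin d) := Function.extend ι w 0 with hv
  have hvι : ∀ s, v (ι s) = w s := fun s => hιinj.extend_apply w 0 s
  have hrest : Orthonormal ℂ ((Set.range ι).restrict v) := by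
    rw [orthonormal_iff_ite]
    intro x y
    obtain ⟨s, hs⟩ := x.2
    obtain ⟨t, ht⟩ := y.2
    show inner ℂ (v x) (v y) = _
    rw [← hs, ← ht, hvι, hvι, hinner s t]
    by_cases hst : s = t
    · subst hst; simp [Subtype.ext (hs.symm.trans ht)]
    · have hne : ¬ (x = y) := by
        intro hh
        exact hst (hιinj (hs.trans ((congrArg Subtype.val hh).trans ht.symm)))
      simp [hst, hne]
  obtain ⟨b, hb⟩ := hrest.exists_orthonormalBasis_extension_of_card_eq
    (by simp [finrank_euclideanSpace])
  have hbw : ∀ s, b (ι s) = w s := fun s => (hb (ι s) ⟨s, rfl⟩).trans (hvι s)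
  set lam : Fin d × Fin d → ℝ := Function.extend ι (fun s => (c s)^2) 0 with hlam
  have hlamι : ∀ s, lam (ι s) = (c s)^2 := fun s => hιinj.extend_apply _ (0 : Fin d × Fin d → ℝ) s
  have hlam0 : ∀ y, y ∉ Set.range ι → lam y = 0 := by
    intro y hy
    rw [hlam, Function.extend_apply' _ _ _ (by simpa [Set.mem_range] using hy)]
    rfl
  set Vm : Matrix ((Fin d × Fin d) × Fin d) ((Fin d × Fin d) × Fin d) ℂ :=
    Matrix.of (fun z u => (b u.1) z.1 * (if z.2 = u.2 then 1 else 0)) with hVm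
  have hVu : Vm ∈ Matrix.unitaryGroup ((Fin d × Fin d) × Fin d) ℂ := by
    rw [Matrix.mem_unitaryGroup_iff']
    ext u u'
    calc (star Vm * Vm) u u' = ∑ z, star (Vm z u) * Vm z u' := by
          rw [Matrix.mul_apply]
          apply Finset.sum_congr rfl
          intro z _
          rw [Matrix.star_apply]
      _ = (∑ x, star ((b u.1) x) * (b u'.1) x)
            * (∑ k, (if k = u.2 then (1:ℂ) else 0) * (if k = u'.2 then 1 else 0)) := by
          rw [Fintype.sum_prod_type, Finset.sum_mul_sum]
          apply Finset.sum_congr rfl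
          intro x _
          apply Finset.sum_congr rfl
          intro k _
          simp only [hVm, Matrix.of_apply]
          rw [star_mul']
          have hsi : star (if k = u.2 then (1:ℂ) else 0) = if k = u.2 then 1 else 0 := by
            by_cases hk : k = u.2 <;> simp [hk]
          rw [hsi]
          ring
      _ = (if u.1 = u'.1 then 1 else 0) * (if u.2 = u'.2 then 1 else 0) := by
          congr 1
          · have hob := b.orthonormal
            rw [orthonormal_iff_ite] at hob
            have h1 := hob u.1 u'.1
            calc ∑ x, star ((b u.1) x) * (b u'.1) x = (inner ℂ (b u.1) (b u'.1) : ℂ) := by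
                  simp [PiLp.inner_apply, RCLike.inner_apply, RCLike.star_def]
                  exact Finset.sum_congr rfl fun _ _ => mul_comm _ _
              _ = _ := h1
          · by_cases h22 : u.2 = u'.2
            · simp [h22]
            · rw [if_neg h22, Finset.sum_eq_zero]
              intro k _
              by_cases hk : k = u.2
              · have hk2 : ¬ k = u'.2 := fun hh => h22 (hk.symm.trans hh)
                rw [if_neg hk2, mul_zero]
              · simp [hk]
      _ = (1 : Matrix ((Fin d × Fin d) × Fin d) ((Fin d × Fin d) × Fin d) ℂ) u u' := by
          by_cases h1 : u.1 = u'.1 <;> by_cases h2 : u.2 = u'.2 <;>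
            simp [Matrix.one_apply, Prod.ext_iff, h1, h2]
  have hdiag : ((1 : ℂ) / (d ^ 2 : ℂ)) • ∑ i, redSnd (PsiMsg U (σ i))
      = Vm * Matrix.diagonal (fun u : (Fin d × Fin d) × Fin d => ((lam u.1 / d : ℝ) : ℂ)) * Vmᴴ := by
    ext z z'
    rw [Matrix.smul_apply, sum_redSnd_entry hd U c E F hdecomp hE σ hσ z z']
    have hRHS : (Vm * Matrix.diagonal (fun u : (Fin d × Fin d) × Fin d => ((lam u.1 / d : ℝ) : ℂ)) * Vmᴴ) z z'
        = ∑ u : (Fin d × Fin d) × Fin d,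
            ((lam u.1 / d : ℝ) : ℂ) * ((b u.1) z.1 * star ((b u.1) z'.1))
            * ((if z.2 = u.2 then 1 else 0) * (if z'.2 = u.2 then 1 else 0)) := by
      rw [Matrix.mul_assoc, Matrix.mul_apply]
      apply Finset.sum_congr rfl
      intro u _
      rw [Matrix.diagonal_mul, Matrix.conjTranspose_apply]
      simp only [hVm, Matrix.of_apply]
      rw [star_mul']
      have hsi : star (if z'.2 = u.2 then (1:ℂ) else 0) = if z'.2 = u.2 then 1 else 0 := by
        by_cases hk : z'.2 = u.2 <;> simp [hk]
      rw [hsi]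
      ring
    rw [hRHS]
    have hstep : ∑ u : (Fin d × Fin d) × Fin d,
        ((lam u.1 / d : ℝ) : ℂ) * ((b u.1) z.1 * star ((b u.1) z'.1))
          * ((if z.2 = u.2 then 1 else 0) * (if z'.2 = u.2 then 1 else 0))
        = (∑ y : Fin d × Fin d, ((lam y / d : ℝ) : ℂ) * ((b y) z.1 * star ((b y) z'.1)))
            * (if z.2 = z'.2 then 1 else 0) := by
      rw [Fintype.sum_prod_type, Finset.sum_mul]
      apply Finset.sum_congr rfl
      intro y _
      have hred : ∀ k : Fin d,
          ((lam (y,k).1 / d : ℝ) : ℂ) * ((b (y,k).1) z.1 * star ((b (y,k).1) z'.1))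
            * ((if z.2 = (y,k).2 then 1 else 0) * (if z'.2 = (y,k).2 then 1 else 0))
          = ((lam y / d : ℝ) : ℂ) * ((b y) z.1 * star ((b y) z'.1))
            * ((if z.2 = k then 1 else 0) * (if z'.2 = k then 1 else 0)) := fun k => rfl
      rw [Finset.sum_congr rfl fun k _ => hred k, ← Finset.mul_sum]
      congr 1
      by_cases hzz : z.2 = z'.2
      · rw [hzz]
        simp
      · have h0 : ∀ k ∈ Finset.univ, (if z.2 = k then (1:ℂ) else 0) * (if z'.2 = k then 1 else 0)
            = 0 := by
          intro k _
          by_cases hk : z.2 = k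
          · have hk2 : ¬ z'.2 = k := fun hh => hzz (hk.trans hh.symm)
            simp [hk, hk2]
          · simp [hk]
        rw [Finset.sum_eq_zero h0, if_neg hzz]
    rw [hstep]
    have hysum : ∑ y : Fin d × Fin d, ((lam y / d : ℝ) : ℂ) * ((b y) z.1 * star ((b y) z'.1))
        = (1/(d:ℂ)^2) * ∑ s, (c s:ℂ)^2
            * (F s z.1.1 z.1.2 * star (F s z'.1.1 z'.1.2)) := by
      have h1 : ∑ y : Fin d × Fin d, ((lam y / d : ℝ) : ℂ) * ((b y) z.1 * star ((b y) z'.1))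
          = ∑ y ∈ Finset.univ.image ι,
              ((lam y / d : ℝ) : ℂ) * ((b y) z.1 * star ((b y) z'.1)) := by
        symm
        apply Finset.sum_subset (Finset.subset_univ _)
        intro y _ hy
        have h0 : lam y = 0 := hlam0 y (by
          intro hmem
          apply hy
          rcases hmem with ⟨s, rfl⟩
          exact Finset.mem_image_of_mem ι (mem_univ s))
        rw [h0]
        simp
      rw [h1, Finset.sum_image (fun x _ y _ hxy => hιinj hxy), Finset.mul_sum]
      apply Finset.sum_congr rfl
      intro s _
      rw [hlamι, hbw]
      have hws1 : (w s) z.1 = r⁻¹ * F s z.1.1 z.1.2 := rfl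
      have hws2 : (w s) z'.1 = r⁻¹ * F s z'.1.1 z'.1.2 := rfl
      rw [hws1, hws2, star_mul', hstar_r]
      have hcast : ((c s ^ 2 / d : ℝ) : ℂ) = (c s:ℂ)^2 / (d:ℂ) := by push_cast; ring
      rw [hcast]
      have hd20 : (d:ℂ)^2 ≠ 0 := pow_ne_zero 2 hd0
      linear_combination ((c s:ℂ)^2/(d:ℂ)
        * (F s z.1.1 z.1.2 * star (F s z'.1.1 z'.1.2))) * hrinv
    rw [hysum]
    push_cast
    rw [smul_eq_mul]
    ring
  have heig := eig_sum_of_diag h hVu (fun u => lam u.1 / d) hdiag (fun x => x * Real.log x)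
  have hsc := sum_c_sq hd U hU c E F hdecomp hE hF
  have heig' : ∑ i, h.eigenvalues i * Real.log (h.eigenvalues i)
      = ∑ u : (Fin d × Fin d) × Fin d, (lam u.1/d) * Real.log (lam u.1/d) := by
    simpa using heig
  unfold vN
  rw [heig']
  have hsum1 : ∑ u : (Fin d × Fin d) × Fin d, (lam u.1/d) * Real.log (lam u.1/d)
      = (d:ℝ) * ∑ y : Fin d × Fin d, (lam y/d) * Real.log (lam y/d) := by
    rw [Fintype.sum_prod_type, Finset.mul_sum]
    apply Finset.sum_congr rfl
    intro y _
    simp [Finset.sum_const, Finset.card_univ, Fintype.card_fin, nsmul_eq_mul]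
  have hsum2 : ∑ y : Fin d × Fin d, (lam y/d) * Real.log (lam y/d)
      = ∑ s, ((c s)^2/d) * Real.log ((c s)^2/d) := by
    have h1 : ∑ y : Fin d × Fin d, (lam y/d) * Real.log (lam y/d)
        = ∑ y ∈ Finset.univ.image ι, (lam y/d) * Real.log (lam y/d) := by
      symm
      apply Finset.sum_subset (Finset.subset_univ _)
      intro y _ hy
      have h0 : lam y = 0 := hlam0 y (by
        intro hmem
        apply hy
        rcases hmem with ⟨s, rfl⟩
        exact Finset.mem_image_of_mem ι (mem_univ s))
      rw [h0]
      simp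
    rw [h1, Finset.sum_image (fun x _ y _ hxy => hιinj hxy)]
    apply Finset.sum_congr rfl
    intro s _
    rw [hlamι]
  have hterm : ∀ s, (d:ℝ) * (((c s)^2/d) * Real.log ((c s)^2/d))
      = (c s)^2 * Real.log ((c s)^2) - (c s)^2 * Real.log d := by
    intro s
    rw [Real.log_div (pow_ne_zero 2 (ne_of_gt (hc s))) hdR0]
    field_simp
  rw [hsum1, hsum2, Finset.mul_sum, Finset.sum_congr rfl fun s _ => hterm s,
    Finset.sum_sub_distrib, ← Finset.sum_mul, hsc, one_mul]
  ring

end HolAux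
/-- each `Ψ_i^{BB₁B₂}` has entropy `log d`, the average state has entropy
`log d + K(U)`, hence the Holevo quantity of `{1/d², Ψ_i^{BB₁B₂}}` equals `K(U)`. -/
theorem holevo_equals_schmidt_strength (d S : ℕ) (hd : 0 < d)
    (U : Matrix (Fin d × Fin d) (Fin d × Fin d) ℂ)
    (hU : U ∈ Matrix.unitaryGroup (Fin d × Fin d) ℂ)
    (c : Fin S → ℝ) (E F : Fin S → Matrix (Fin d) (Fin d) ℂ)
    (hc : ∀ s, 0 < c s)
    (hdecomp : U = ∑ s, (c s : ℂ) • (E s ⊗ₖ F s))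
    (hE : ∀ s s', (1 / d : ℂ) * ((E s)ᴴ * E s').trace = if s = s' then 1 else 0)
    (hF : ∀ s s', (1 / d : ℂ) * ((F s)ᴴ * F s').trace = if s = s' then 1 else 0)
    (σ : Fin (d * d) → Matrix (Fin d) (Fin d) ℂ)
    (hσu : ∀ i, σ i ∈ Matrix.unitaryGroup (Fin d) ℂ)
    (hσ : ∀ i j, (1 / d : ℂ) * ((σ i)ᴴ * σ j).trace = if i = j then 1 else 0) :
    (∀ i (h : (redSnd (PsiMsg U (σ i))).IsHermitian), vN h = Real.log d) ∧
    (∀ h : (((1 : ℂ) / (d ^ 2 : ℂ)) • ∑ i, redSnd (PsiMsg U (σ i))).IsHermitian,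
      vN h = Real.log d + (-∑ s, c s ^ 2 * Real.log (c s ^ 2))) ∧
    (∀ (h : (((1 : ℂ) / (d ^ 2 : ℂ)) • ∑ i, redSnd (PsiMsg U (σ i))).IsHermitian)
      (hi : ∀ i, (redSnd (PsiMsg U (σ i))).IsHermitian),
      vN h - ((1 : ℝ) / (d ^ 2 : ℝ)) * ∑ i, vN (hi i)
        = -∑ s, c s ^ 2 * Real.log (c s ^ 2)) := by
  have hP1 : ∀ i (h : (redSnd (PsiMsg U (σ i))).IsHermitian), vN h = Real.log d :=
    fun i h => HolAux.part1 hd U hU (σ i) (hσu i) h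
  have hP2 : ∀ h : (((1 : ℂ) / (d ^ 2 : ℂ)) • ∑ i, redSnd (PsiMsg U (σ i))).IsHermitian,
      vN h = Real.log d + (-∑ s, c s ^ 2 * Real.log (c s ^ 2)) :=
    fun h => HolAux.part2 hd U hU c E F hc hdecomp hE hF σ hσ h
  refine ⟨hP1, hP2, ?_⟩
  intro h hi
  rw [hP2 h]
  have hsum : ∑ i, vN (hi i) = ((d*d : ℕ) : ℝ) * Real.log d := by
    rw [Finset.sum_congr rfl fun i _ => hP1 i (hi i), Finset.sum_const, Finset.card_univ,
      Fintype.card_fin, nsmul_eq_mul]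
  rw [hsum]
  have hdR0 : (d:ℝ) ≠ 0 := Nat.cast_ne_zero.mpr hd.ne'
  push_cast
  field_simp
  ring
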